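/- Let G be a finite simple graph with adjacency matrix A and degree matrix D = diag(A𝟙). For k ∈ ℕ let P_k ∈ ℝ^{n×n} be defined entrywise by (P_k)_{ij} = the number of nonbacktracking walks of length k from i to j in G. Then P_0 = I, P_1 = A, P_2 = A² − D, and for every k ≥ 3 the three-term recurrence P_k = A·P_{k−1} + (I − D)·P_{k−2} holds. -/

import Mathlib

open Matrix

/-- The number of backtracking instances of a walk `w`, i.e. the number of indices
`ℓ` with `0 ≤ ℓ ≤ length − 2` such that the `ℓ`-th and `(ℓ+2)`-th vertices coincide. -/
def btCount {n : ℕ} {G : SimpleGraph (Fin n)} {i j : Fin n} (w : G.Walk i j) : ℕ :=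
  ((Finset.range (w.length - 1)).filter (fun ℓ => w.getVert ℓ = w.getVert (ℓ + 2))).card

/-- The number of nonbacktracking walks of length `k` from `i` to `j` in `G`. -/
def nbtWalkCount {n : ℕ} (G : SimpleGraph (Fin n)) [DecidableRel G.Adj]
    (k : ℕ) (i j : Fin n) : ℕ :=
  ((G.finsetWalkLength k i j).filter (fun w => btCount w = 0)).card

open SimpleGraph Finset

variable {n : ℕ} {G : SimpleGraph (Fin n)}

lemma btCount_eq_zero_of_length_le {i j : Fin n} {w : G.Walk i j} (h : w.length ≤ 1) :
    btCount w = 0 := by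
  unfold btCount
  have : w.length - 1 = 0 := by omega
  simp [this]

lemma btCount_cons {i m j : Fin n} (h : G.Adj i m) (u : G.Walk m j) :
    btCount (u.cons h) = btCount u + (if i = u.getVert 1 then 1 else 0) := by
  unfold btCount
  rw [Finset.card_filter, Finset.card_filter]
  rcases Nat.eq_zero_or_pos u.length with h0 | hpos
  · have hm : m = j := u.eq_of_length_eq_zero h0
    have h1 : u.getVert 1 = j := u.getVert_of_length_le (by omega)
    have : i ≠ u.getVert 1 := by rw [h1, ← hm]; exact h.ne
    simp [SimpleGraph.Walk.length_cons, h0, this]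
  · obtain ⟨t, ht⟩ : ∃ t, u.length = t + 1 := ⟨u.length - 1, by omega⟩
    have hlen : (u.cons h).length - 1 = t + 1 := by
      simp [SimpleGraph.Walk.length_cons, ht]
    rw [hlen, Finset.sum_range_succ']
    have hl2 : u.length - 1 = t := by omega
    rw [hl2]
    have e0 : ∀ ℓ : ℕ, (u.cons h).getVert (ℓ + 1) = u.getVert ℓ :=
      fun ℓ => SimpleGraph.Walk.getVert_cons_succ u h
    have e3 : ∀ ℓ : ℕ, (u.cons h).getVert (ℓ + 3) = u.getVert (ℓ + 2) :=
      fun ℓ => SimpleGraph.Walk.getVert_cons_succ u h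
    simp only [show ∀ ℓ:ℕ, ℓ + 1 + 2 = ℓ + 3 from fun _ => rfl, e0, e3,
      SimpleGraph.Walk.getVert_zero]

lemma btCount_cons_eq_zero_iff {i m j : Fin n} (h : G.Adj i m) (u : G.Walk m j) :
    btCount (u.cons h) = 0 ↔ btCount u = 0 ∧ i ≠ u.getVert 1 := by
  rw [btCount_cons]
  split_ifs with hi <;> simp [hi]

variable [DecidableRel G.Adj]

lemma card_cons_bij {i m j : Fin n} (h : G.Adj i m) (k : ℕ) :
    ((G.finsetWalkLength (k+1) i j).filter
        (fun w => btCount w = 0 ∧ w.getVert 1 = m)).card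
      = ((G.finsetWalkLength k m j).filter
        (fun u => btCount u = 0 ∧ u.getVert 1 ≠ i)).card := by
  symm
  apply Finset.card_bij (fun u _ => u.cons h)
  · intro u hu
    simp only [Finset.mem_filter, SimpleGraph.mem_finsetWalkLength_iff] at hu ⊢
    refine ⟨by simp [hu.1], ?_, by rw [show (1:ℕ) = 0 + 1 from rfl, SimpleGraph.Walk.getVert_cons_succ, SimpleGraph.Walk.getVert_zero]⟩
    rw [btCount_cons_eq_zero_iff]
    exact ⟨hu.2.1, fun hi => hu.2.2 hi.symm⟩
  · intro u1 hu1 u2 hu2 hab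
    simpa using hab
  · intro w hw
    simp only [Finset.mem_filter, SimpleGraph.mem_finsetWalkLength_iff] at hw
    obtain ⟨hlen, hbt, hv1⟩ := hw
    cases w with
    | nil => simp at hlen
    | @cons _ b _ h' q =>
      have hb : b = m := by rw [← hv1, show (1:ℕ) = 0 + 1 from rfl, SimpleGraph.Walk.getVert_cons_succ, SimpleGraph.Walk.getVert_zero]
      subst hb
      refine ⟨q, ?_, rfl⟩
      rw [btCount_cons_eq_zero_iff] at hbt
      simp only [Finset.mem_filter, SimpleGraph.mem_finsetWalkLength_iff]
      exact ⟨by simpa using hlen, hbt.1, fun hq => hbt.2 hq.symm⟩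

lemma nbt_eq_sum_fibers {k : ℕ} (hk : 1 ≤ k) (i j : Fin n) :
    nbtWalkCount G k i j
      = ∑ m ∈ G.neighborFinset i,
          ((G.finsetWalkLength k i j).filter
            (fun w => btCount w = 0 ∧ w.getVert 1 = m)).card := by
  unfold nbtWalkCount
  rw [Finset.card_eq_sum_card_fiberwise
    (f := fun w => w.getVert 1) (t := G.neighborFinset i) ?_]
  · apply Finset.sum_congr rfl
    intro m _
    rw [Finset.filter_filter]
  · intro w hw
    simp only [Finset.mem_coe, Finset.mem_filter, SimpleGraph.mem_finsetWalkLength_iff] at hw ⊢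
    rw [SimpleGraph.mem_neighborFinset]
    have := w.adj_getVert_succ (i := 0) (by omega)
    simpa [SimpleGraph.Walk.getVert_zero] using this

lemma nbt_split (k : ℕ) (m j : Fin n) (i : Fin n) :
    nbtWalkCount G k m j
      = ((G.finsetWalkLength k m j).filter
          (fun w => btCount w = 0 ∧ w.getVert 1 = i)).card
        + ((G.finsetWalkLength k m j).filter
          (fun w => btCount w = 0 ∧ w.getVert 1 ≠ i)).card := by
  unfold nbtWalkCount
  rw [← Finset.filter_filter, ← Finset.filter_filter,
    Finset.card_filter_add_card_filter_not]

lemma key_identity (k : ℕ) (hk : 1 ≤ k) (i j : Fin n) :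
    (∑ m ∈ G.neighborFinset i, nbtWalkCount G (k+1) m j) + nbtWalkCount G k i j
      = nbtWalkCount G (k+2) i j
        + (G.neighborFinset i).card * nbtWalkCount G k i j := by
  have hsum : ∑ m ∈ G.neighborFinset i, nbtWalkCount G (k+1) m j
      = (∑ m ∈ G.neighborFinset i,
          ((G.finsetWalkLength k i j).filter
            (fun w => btCount w = 0 ∧ w.getVert 1 ≠ m)).card)
        + ∑ m ∈ G.neighborFinset i,
          ((G.finsetWalkLength (k+2) i j).filter
            (fun w => btCount w = 0 ∧ w.getVert 1 = m)).card := by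
    rw [← Finset.sum_add_distrib]
    apply Finset.sum_congr rfl
    intro m hm
    have h : G.Adj i m := by rwa [← SimpleGraph.mem_neighborFinset]
    rw [nbt_split (k+1) m j i, card_cons_bij h.symm k, card_cons_bij h (k+1)]
  have hfib2 := nbt_eq_sum_fibers (G := G) (k := k+2) (by omega) i j
  have hfib := nbt_eq_sum_fibers (G := G) (k := k) hk i j
  have hdeg : (G.neighborFinset i).card * nbtWalkCount G k i j
      = nbtWalkCount G k i j
        + ∑ m ∈ G.neighborFinset i,
          ((G.finsetWalkLength k i j).filter
            (fun w => btCount w = 0 ∧ w.getVert 1 ≠ m)).card := by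
    calc (G.neighborFinset i).card * nbtWalkCount G k i j
        = ∑ _m ∈ G.neighborFinset i, nbtWalkCount G k i j := by
          rw [Finset.sum_const, smul_eq_mul]
      _ = ∑ m ∈ G.neighborFinset i,
            (((G.finsetWalkLength k i j).filter
              (fun w => btCount w = 0 ∧ w.getVert 1 = m)).card
            + ((G.finsetWalkLength k i j).filter
              (fun w => btCount w = 0 ∧ w.getVert 1 ≠ m)).card) :=
          Finset.sum_congr rfl (fun m _ => nbt_split k i j m)
      _ = _ := by rw [Finset.sum_add_distrib, ← hfib]
  rw [hsum, hdeg, hfib2]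
  ring

lemma btCount_two {i j : Fin n} {w : G.Walk i j} (h : w.length = 2) :
    btCount w = if i = j then 1 else 0 := by
  unfold btCount
  have h2 : w.getVert 2 = j := by rw [← h]; exact w.getVert_length
  rw [h]
  simp [Finset.filter_singleton, Finset.range_one, SimpleGraph.Walk.getVert_zero, h2]
  split_ifs <;> simp

theorem nbt_walk_count_recurrence'
    (A D : Matrix (Fin n) (Fin n) ℝ)
    (hA : A = G.adjMatrix ℝ)
    (hD : D = Matrix.diagonal (A *ᵥ fun _ => (1 : ℝ)))
    (P : ℕ → Matrix (Fin n) (Fin n) ℝ)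
    (hP : ∀ k i j, P k i j = (nbtWalkCount G k i j : ℝ)) :
    P 0 = 1 ∧ P 1 = A ∧ P 2 = A ^ 2 - D ∧
    ∀ k, 3 ≤ k → P k = A * P (k - 1) + ((1 : Matrix (Fin n) (Fin n) ℝ) - D) * P (k - 2) := by
  subst hA hD
  have hDdiag : ∀ i : Fin n, (G.adjMatrix ℝ *ᵥ fun _ => (1:ℝ)) i = (G.degree i : ℝ) := by
    intro i
    have := SimpleGraph.adjMatrix_mulVec_const_apply (G := G) (α := ℝ) (a := (1:ℝ)) (v := i)
    simpa using this
  have hpow : ∀ (k : ℕ) (i j : Fin n),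
      (G.adjMatrix ℝ ^ k) i j = ((G.finsetWalkLength k i j).card : ℝ) := by
    intro k i j
    rw [SimpleGraph.adjMatrix_pow_apply_eq_card_walk, SimpleGraph.card_set_walk_length_eq]
  refine ⟨?_, ?_, ?_, ?_⟩
  · ext i j
    rw [hP]
    unfold nbtWalkCount
    rw [Finset.filter_true_of_mem (fun w hw => btCount_eq_zero_of_length_le
      (by rw [SimpleGraph.mem_finsetWalkLength_iff.mp hw]; omega))]
    rw [← hpow]
    simp
  · ext i j
    rw [hP]
    unfold nbtWalkCount
    rw [Finset.filter_true_of_mem (fun w hw => btCount_eq_zero_of_length_le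
      (by rw [SimpleGraph.mem_finsetWalkLength_iff.mp hw]))]
    rw [← hpow]
    simp
  · ext i j
    rw [hP]
    unfold nbtWalkCount
    rw [Matrix.sub_apply, Matrix.diagonal_apply, hDdiag]
    by_cases hij : i = j
    · subst hij
      rw [Finset.filter_false_of_mem (fun w hw => by
        rw [btCount_two (SimpleGraph.mem_finsetWalkLength_iff.mp hw)]; simp)]
      rw [pow_two, SimpleGraph.adjMatrix_mul_self_apply_self]
      simp
    · rw [Finset.filter_true_of_mem (fun w hw => by
        rw [btCount_two (SimpleGraph.mem_finsetWalkLength_iff.mp hw)]; simp [hij])]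
      rw [hpow]
      simp [hij]
  · intro k hk
    obtain ⟨t, rfl⟩ : ∃ t, k = t + 3 := ⟨k - 3, by omega⟩
    have h1 : t + 3 - 1 = t + 2 := by omega
    have h2 : t + 3 - 2 = t + 1 := by omega
    rw [h1, h2]
    ext i j
    rw [Matrix.add_apply, SimpleGraph.adjMatrix_mul_apply, sub_mul, one_mul,
      Matrix.sub_apply, Matrix.diagonal_mul, hDdiag]
    simp only [hP]
    have hkey := key_identity (G := G) (t+1) (by omega) i j
    rw [SimpleGraph.card_neighborFinset_eq_degree] at hkey
    have : ((∑ m ∈ G.neighborFinset i, nbtWalkCount G (t+2) m j : ℕ) : ℝ)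
        + (nbtWalkCount G (t+1) i j : ℝ)
        = (nbtWalkCount G (t+3) i j : ℝ)
          + (G.degree i : ℝ) * (nbtWalkCount G (t+1) i j : ℝ) := by
      exact_mod_cast congrArg (Nat.cast : ℕ → ℝ) hkey
    push_cast at this
    linarith


/-- Let `A = G.adjMatrix ℝ` and `D = diag(A𝟙)` be the adjacency and degree
matrices of a finite simple graph, and let `(P k) i j` be the number of nonbacktracking
walks of length `k` from `i` to `j`. Then `P 0 = I`, `P 1 = A`, `P 2 = A² − D`, and for
every `k ≥ 3`, `P k = A·P (k−1) + (I − D)·P (k−2)`. -/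
theorem nbt_walk_count_recurrence
    {n : ℕ} (G : SimpleGraph (Fin n)) [DecidableRel G.Adj]
    (A D : Matrix (Fin n) (Fin n) ℝ)
    (hA : A = G.adjMatrix ℝ)
    (hD : D = Matrix.diagonal (A *ᵥ fun _ => (1 : ℝ)))
    (P : ℕ → Matrix (Fin n) (Fin n) ℝ)
    (hP : ∀ k i j, P k i j = (nbtWalkCount G k i j : ℝ)) :
    P 0 = 1 ∧ P 1 = A ∧ P 2 = A ^ 2 - D ∧
    ∀ k, 3 ≤ k → P k = A * P (k - 1) + ((1 : Matrix (Fin n) (Fin n) ℝ) - D) * P (k - 2) := by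
  exact nbt_walk_count_recurrence' A D hA hD P hP
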